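/- arXiv:1006.1076 — 6 statements merged into one kernel-verified Lean document; each statement's English description precedes it below -/
import Mathlib

section
/- For any 4×4 matrix M over a commutative ring, the minors satisfy the identity Δ_{34,13}·Δ_{13,12} = Δ_{34,12}·Δ_{13,13} + Δ_{134,123}·Δ_{3,1}, where Δ_{r,b} denotes the determinant of the submatrix of M with rows indexed by the set r and columns indexed by the set b. -/
open Matrix

/-- For a 4×4 matrix `M` over a commutative ring,
`Δ_{34,13}·Δ_{13,12} = Δ_{34,12}·Δ_{13,13} + Δ_{134,123}·Δ_{3,1}`. -/
theorem stmt_0 {R : Type*} [CommRing R] (M : Matrix (Fin 4) (Fin 4) R) :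
    (M.submatrix ![2, 3] ![0, 2]).det * (M.submatrix ![0, 2] ![0, 1]).det =
      (M.submatrix ![2, 3] ![0, 1]).det * (M.submatrix ![0, 2] ![0, 2]).det +
        (M.submatrix ![0, 2, 3] ![0, 1, 2]).det * M 2 0 := by
  simp only [det_fin_two, det_fin_three]
  simp
  ring
end

section
/- For any 4×4 matrix M over a commutative ring, the minors satisfy the identity Δ_{14,12}·Δ_{34,13} = Δ_{14,13}·Δ_{34,12} + Δ_{134,123}·Δ_{4,1}, where Δ_{r,b} denotes the determinant of the submatrix of M with rows indexed by r and columns indexed by b. -/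
open Matrix

/-- For a 4×4 matrix `M` over a commutative ring,
`Δ_{14,12}·Δ_{34,13} = Δ_{14,13}·Δ_{34,12} + Δ_{134,123}·Δ_{4,1}`. -/
theorem stmt_2 {R : Type*} [CommRing R] (M : Matrix (Fin 4) (Fin 4) R) :
    (M.submatrix ![0, 3] ![0, 1]).det * (M.submatrix ![2, 3] ![0, 2]).det =
      (M.submatrix ![0, 3] ![0, 2]).det * (M.submatrix ![2, 3] ![0, 1]).det +
        (M.submatrix ![0, 2, 3] ![0, 1, 2]).det * M 3 0 := by
  rw [det_fin_two, det_fin_two, det_fin_two, det_fin_two, det_fin_three]; simp; ring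
end

section
/- Let M be a 4×4 matrix over a linearly ordered field. If the chamber minors Δ_{1,1}, Δ_{3,1}, Δ_{4,1}, Δ_{13,12}, Δ_{34,12} are all positive, then the minor Δ_{14,12} is positive. -/
open Matrix

/-- For a 4×4 matrix over a linearly ordered field, positivity of the chamber
minors `Δ_{1,1}, Δ_{3,1}, Δ_{4,1}, Δ_{13,12}, Δ_{34,12}` implies `Δ_{14,12} > 0`. -/
theorem stmt_4 {K : Type*} [Field K] [LinearOrder K] [IsStrictOrderedRing K] (M : Matrix (Fin 4) (Fin 4) K)
    (h11 : 0 < M 0 0) (h31 : 0 < M 2 0) (h41 : 0 < M 3 0)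
    (h1312 : 0 < (M.submatrix ![0, 2] ![0, 1]).det)
    (h3412 : 0 < (M.submatrix ![2, 3] ![0, 1]).det) :
    0 < (M.submatrix ![0, 3] ![0, 1]).det := by
  have key : (M.submatrix ![0, 3] ![0, 1]).det * M 2 0
      = (M.submatrix ![2, 3] ![0, 1]).det * M 0 0
        + (M.submatrix ![0, 2] ![0, 1]).det * M 3 0 := by
    rw [Matrix.det_fin_two, Matrix.det_fin_two, Matrix.det_fin_two]; simp; ring
  have hpos : 0 < (M.submatrix ![0, 3] ![0, 1]).det * M 2 0 := by
    rw [key]; positivity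
  exact (mul_pos_iff.mp hpos) |>.elim (fun h => h.1)
    (fun h => absurd h31 (not_lt.mpr h.2.le))
end

section
/- Let M be a 4×4 matrix over a linearly ordered field. If the minors Δ_{3,1}, Δ_{13,12}, Δ_{13,13}, Δ_{34,12}, Δ_{134,123} are all positive, then the minor Δ_{34,13} is positive. -/
open Matrix

/-- For a 4×4 matrix over a linearly ordered field, positivity of the minors
`Δ_{3,1}, Δ_{13,12}, Δ_{13,13}, Δ_{34,12}, Δ_{134,123}` implies `Δ_{34,13} > 0`. -/
theorem stmt_5 {K : Type*} [Field K] [LinearOrder K] [IsStrictOrderedRing K] (M : Matrix (Fin 4) (Fin 4) K)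
    (h31 : 0 < M 2 0)
    (h1312 : 0 < (M.submatrix ![0, 2] ![0, 1]).det)
    (h1313 : 0 < (M.submatrix ![0, 2] ![0, 2]).det)
    (h3412 : 0 < (M.submatrix ![2, 3] ![0, 1]).det)
    (h134123 : 0 < (M.submatrix ![0, 2, 3] ![0, 1, 2]).det) :
    0 < (M.submatrix ![2, 3] ![0, 2]).det := by
  simp only [det_fin_two, det_fin_three, submatrix_apply] at *
  simp only [Matrix.cons_val_zero, Matrix.cons_val_one, Matrix.head_cons, Matrix.cons_val_two, Matrix.tail_cons] at *
  nlinarith [sq_nonneg (M 0 0), mul_pos h1312 h3412, mul_pos h1313 h134123, mul_pos h31 h134123]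
end

section
/- For any 4×4 matrix M over a commutative ring, the three-term exchange identity Δ_{134,123}·Δ_{3,1}·Δ_{1,1} + Δ_{34,12}·Δ_{13,13}·Δ_{1,1} + Δ_{13,13}·Δ_{4,1}·Δ_{13,12} = Δ_{14,13}·Δ_{13,12}·Δ_{3,1} holds, where Δ_{r,b} denotes the minor of M with rows r and columns b. -/
open Matrix

/-- Three-term exchange identity for a 4×4 matrix over a commutative ring:
`Δ_{134,123}·Δ_{3,1}·Δ_{1,1} + Δ_{34,12}·Δ_{13,13}·Δ_{1,1} + Δ_{13,13}·Δ_{4,1}·Δ_{13,12}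
  = Δ_{14,13}·Δ_{13,12}·Δ_{3,1}`. -/
theorem stmt_16 {R : Type*} [CommRing R] (M : Matrix (Fin 4) (Fin 4) R) :
    (M.submatrix ![0, 2, 3] ![0, 1, 2]).det * M 2 0 * M 0 0 +
        (M.submatrix ![2, 3] ![0, 1]).det * (M.submatrix ![0, 2] ![0, 2]).det * M 0 0 +
        (M.submatrix ![0, 2] ![0, 2]).det * M 3 0 * (M.submatrix ![0, 2] ![0, 1]).det =
      (M.submatrix ![0, 3] ![0, 2]).det * (M.submatrix ![0, 2] ![0, 1]).det * M 2 0 := by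
  simp only [det_fin_three, det_fin_two]
  simp
  ring
end

section
/- Let M be a 4×4 matrix over a linearly ordered field with Δ_{3,1} > 0, Δ_{13,12} > 0. If Δ_{1,1}, Δ_{4,1}, Δ_{13,13}, Δ_{34,12}, Δ_{134,123} are all positive, then Δ_{14,13} > 0. -/
open Matrix

/-- For a 4×4 matrix over a linearly ordered field, if
`Δ_{3,1}, Δ_{13,12}, Δ_{1,1}, Δ_{4,1}, Δ_{13,13}, Δ_{34,12}, Δ_{134,123}` are positive,
then `Δ_{14,13} > 0`. -/
theorem stmt_17 {K : Type*} [Field K] [LinearOrder K] [IsStrictOrderedRing K] (M : Matrix (Fin 4) (Fin 4) K)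
    (h31 : 0 < M 2 0) (h1312 : 0 < (M.submatrix ![0, 2] ![0, 1]).det)
    (h11 : 0 < M 0 0) (h41 : 0 < M 3 0)
    (h1313 : 0 < (M.submatrix ![0, 2] ![0, 2]).det)
    (h3412 : 0 < (M.submatrix ![2, 3] ![0, 1]).det)
    (h134123 : 0 < (M.submatrix ![0, 2, 3] ![0, 1, 2]).det) :
    0 < (M.submatrix ![0, 3] ![0, 2]).det := by
  simp only [Matrix.det_fin_two, Matrix.det_fin_three, Matrix.submatrix_apply] at *
  simp only [Matrix.cons_val_zero, Matrix.cons_val_one, Matrix.head_cons,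
    Matrix.cons_val_two, Matrix.tail_cons] at *
  nlinarith [mul_pos h31 h1312, mul_pos h11 h134123, mul_pos h1313 h3412,
    mul_pos h41 h1313, mul_pos (mul_pos h31 h11) h134123,
    mul_pos (mul_pos h11 h1313) h3412, mul_pos (mul_pos h41 h1313) h1312]
end
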